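/- Let a, b ∈ (π/m)ℤ with e^{ia} = -1 and e^{ib} ≠ -1. Then I(a,b) = m if e^{ibm} = (-1)^m, and I(a,b) = 1 - m - ((1-e^{ib})/(1+e^{ib}))² if e^{ibm} = -(-1)^m. -/

import Mathlib

open Complex Finset

/-- The modular S-matrix of the N=2 superconformal algebra at level `m`. -/
noncomputable def Smat (m : ℕ) (u v : ℝ × ℝ) : ℂ :=
  (2 / (m : ℂ)) * Complex.exp (Real.pi * Complex.I * (((u.1 - u.2) * (v.1 - v.2) / m : ℝ) : ℂ)) *
    Complex.sin (((Real.pi * (u.1 + u.2) * (v.1 + v.2) / m : ℝ) : ℂ))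

/-- The Neveu-Schwarz index set `NS^(m)`:
pairs of half-odd-integers `(j,k)` with `0 < j`, `0 < k`, `j + k < m`. -/
noncomputable def NSfin (m : ℕ) : Finset (ℝ × ℝ) :=
  ((Finset.range m ×ˢ Finset.range m).filter fun p => p.1 + p.2 + 1 < m).image
    fun p => ((p.1 : ℝ) + 1 / 2, (p.2 : ℝ) + 1 / 2)

/-- The Ramond index set `R^(m)`:
integer pairs `(j,k)` with `0 < j`, `0 < j + k < m`, `0 ≤ k < m`. -/
noncomputable def Rfin (m : ℕ) : Finset (ℝ × ℝ) :=
  ((Finset.range m ×ˢ Finset.range m).filter fun p => 1 ≤ p.1 ∧ p.1 + p.2 < m).image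
    fun p => ((p.1 : ℝ), (p.2 : ℝ))

/-- The full index set `A^(m) = NS^(m) ∪ R^(m)`. -/
noncomputable def Afin (m : ℕ) : Finset (ℝ × ℝ) := NSfin m ∪ Rfin m

/-- The conjugation `(j,k)* = (k,j)` if `k ≠ 0`, `(m-j, 0)` if `k = 0`. -/
noncomputable def conjA (m : ℕ) (u : ℝ × ℝ) : ℝ × ℝ :=
  if u.2 = 0 then ((m : ℝ) - u.1, 0) else (u.2, u.1)

/-- `J(a,b) = ∑ e^{iaj} e^{ibk}` over integer pairs `(j,k)` with
`0 < k < m`, `-k < j < k` and `j + k` odd. -/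
noncomputable def Jsum (m : ℕ) (a b : ℂ) : ℂ :=
  ∑ k ∈ Finset.Ioo (0 : ℤ) (m : ℤ),
    ∑ j ∈ (Finset.Ioo (-k) k).filter fun j => Odd (j + k),
      Complex.exp (Complex.I * a * j) * Complex.exp (Complex.I * b * k)

/-- `I(a,b) = J(a,b) + J(a,-b)`. -/
noncomputable def Isum (m : ℕ) (a b : ℂ) : ℂ := Jsum m a b + Jsum m a (-b)

/-- The fusion coefficient `N_{u,u',u''}` given by the modified Verlinde formula. -/
noncomputable def Nfus (m : ℕ) (u u' u'' : ℝ × ℝ) : ℂ :=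
  ∑ v ∈ NSfin m,
    Smat m u v * Smat m u' v * Smat m u'' v / Smat m (1 / 2, 1 / 2) v

/-- The fusion coefficient `N_{u,u'}^{u''}` (with conjugated third entry). -/
noncomputable def Ncof (m : ℕ) (u u' w : ℝ × ℝ) : ℂ :=
  ∑ v ∈ NSfin m,
    Smat m u v * Smat m u' v * (starRingEnd ℂ) (Smat m w v) / Smat m (1 / 2, 1 / 2) v

/-- Membership in `𝔽^(m)`: an odd number of the three indices is of Neveu-Schwarz type. -/
def Fmem (m : ℕ) (u u' u'' : ℝ × ℝ) : Prop :=
  (u ∈ NSfin m ∧ u' ∈ NSfin m ∧ u'' ∈ NSfin m) ∨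
  (u ∈ NSfin m ∧ u' ∈ Rfin m ∧ u'' ∈ Rfin m) ∨
  (u ∈ Rfin m ∧ u' ∈ NSfin m ∧ u'' ∈ Rfin m) ∨
  (u ∈ Rfin m ∧ u' ∈ Rfin m ∧ u'' ∈ NSfin m)

lemma sum_mul_geom (z : ℂ) (hz : z ≠ 1) (m : ℕ) :
    ∑ k ∈ Finset.range m, (k : ℂ) * z ^ k
      = ((m : ℂ) * z ^ m * (z - 1) - z ^ (m + 1) + z) / (z - 1) ^ 2 := by
  have h : z - 1 ≠ 0 := sub_ne_zero.mpr hz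
  induction m with
  | zero => simp
  | succ n ih =>
      rw [Finset.sum_range_succ, ih]
      field_simp
      push_cast
      ring

lemma myInnerSum (a : ℂ) (ha : Complex.exp (Complex.I * a) = -1) (k : ℤ) (hk : 0 < k) :
    ∑ j ∈ (Finset.Ioo (-k) k).filter (fun j => Odd (j + k)),
      Complex.exp (Complex.I * a * j) = (-1 : ℂ) ^ (k + 1) * k := by
  have hset : (Finset.Ioo (-k) k).filter (fun j => Odd (j + k))
      = (Finset.range k.toNat).image (fun t : ℕ => 2 * (t : ℤ) - k + 1) := by
    ext j
    simp only [Finset.mem_filter, Finset.mem_Ioo, Finset.mem_image, Finset.mem_range,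
      Int.odd_iff]
    constructor
    · rintro ⟨⟨h1, h2⟩, h3⟩
      refine ⟨((j + k - 1) / 2).toNat, ?_, ?_⟩ <;> omega
    · rintro ⟨t, ht, rfl⟩
      omega
  rw [hset, Finset.sum_image (by intro x _ y _ h; simp only at h; omega)]
  have hterm : ∀ t : ℕ, Complex.exp (Complex.I * a * (2 * (t:ℤ) - k + 1 : ℤ))
      = (-1 : ℂ) ^ (k + 1) := by
    intro t
    have : Complex.exp (Complex.I * a * ((2 * (t:ℤ) - k + 1 : ℤ) : ℂ))
        = Complex.exp (Complex.I * a) ^ (2 * (t:ℤ) - k + 1) := by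
      rw [← Complex.exp_int_mul]; ring_nf
    rw [this, ha]
    have h1 : (2 * (t:ℤ) - k + 1) = 2 * ((t:ℤ) - k) + (k + 1) := by ring
    rw [h1, zpow_add₀ (by norm_num : (-1:ℂ) ≠ 0), zpow_mul]
    norm_num
  calc ∑ t ∈ Finset.range k.toNat, Complex.exp (Complex.I * a * (2 * (t:ℤ) - k + 1 : ℤ))
      = ∑ t ∈ Finset.range k.toNat, (-1:ℂ)^(k+1) := by
        exact Finset.sum_congr rfl fun t _ => hterm t
    _ = (-1:ℂ)^(k+1) * k := by
        rw [Finset.sum_const, Finset.card_range, nsmul_eq_mul]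
        rw [mul_comm]
        congr 1
        exact_mod_cast congrArg (Int.cast : ℤ → ℂ) (Int.toNat_of_nonneg hk.le)
lemma Jsum_eq (m : ℕ) (hm : 0 < m) (a b : ℂ)
    (ha : Complex.exp (Complex.I * a) = -1) :
    Jsum m a b = -∑ k ∈ Finset.range m,
      (k : ℂ) * (-(Complex.exp (Complex.I * b))) ^ k := by
  set y := Complex.exp (Complex.I * b) with hy
  have step1 : Jsum m a b = ∑ k ∈ Finset.Ioo (0:ℤ) (m:ℤ),
      (-1:ℂ) ^ (k+1) * k * y ^ k := by
    unfold Jsum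
    refine Finset.sum_congr rfl fun k hk => ?_
    have hk' : 0 < k ∧ k < m := by simpa using hk
    rw [← Finset.sum_mul, myInnerSum a ha k hk'.1]
    have : Complex.exp (Complex.I * b * (k:ℂ)) = y ^ k := by
      rw [hy, ← Complex.exp_int_mul]; ring_nf
    rw [this]
  have himg : Finset.Ioo (0:ℤ) (m:ℤ)
      = (Finset.range (m-1)).image (fun t : ℕ => (t:ℤ) + 1) := by
    ext j
    simp only [Finset.mem_Ioo, Finset.mem_image, Finset.mem_range]
    constructor
    · rintro ⟨h1, h2⟩
      exact ⟨(j-1).toNat, by omega, by omega⟩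
    · rintro ⟨t, ht, rfl⟩; omega
  rw [step1, himg, Finset.sum_image (by intro x _ y _ h; simp only at h; omega)]
  obtain ⟨n, rfl⟩ : ∃ n, m = n + 1 := ⟨m - 1, by omega⟩
  rw [Finset.sum_range_succ']
  simp only [Nat.add_sub_cancel, Nat.cast_zero, zero_mul, add_zero]
  rw [← Finset.sum_neg_distrib]
  refine Finset.sum_congr rfl fun t _ => ?_
  rw [← neg_one_mul ((((t:ℕ)+1:ℕ):ℂ) * (-y)^((t:ℕ)+1))]
  have h1 : ((t:ℤ) + 1 + 1) = ((t + 2 : ℕ) : ℤ) := by push_cast; ring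
  have h2 : ((t:ℤ) + 1) = ((t + 1 : ℕ) : ℤ) := by push_cast; ring
  rw [h1, h2, zpow_natCast, zpow_natCast]
  rw [neg_pow y (t+1)]
  push_cast
  ring

lemma sum_mul_geom_inv (z : ℂ) (hz0 : z ≠ 0) (hz : z ≠ 1) (m : ℕ) :
    ∑ k ∈ Finset.range m, (k : ℂ) * (z⁻¹) ^ k
      = z * ((m : ℂ) * (1 - z) - 1 + z ^ m) / ((1 - z) ^ 2 * z ^ m) := by
  have h1 : (1 : ℂ) - z ≠ 0 := sub_ne_zero.mpr (Ne.symm hz)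
  induction m with
  | zero => simp
  | succ n ih =>
      have hzn : z ^ n ≠ 0 := pow_ne_zero _ hz0
      rw [Finset.sum_range_succ, ih]
      push_cast
      rw [inv_pow]
      field_simp
      ring

theorem Isum_negone_ne_negone (m : ℕ) (hm : 0 < m) (a b : ℝ)
    (haZ : ∃ p : ℤ, a = Real.pi * p / m) (hbZ : ∃ q : ℤ, b = Real.pi * q / m)
    (ha : Complex.exp (Complex.I * a) = -1) (hb : Complex.exp (Complex.I * b) ≠ -1) :
    (Complex.exp (Complex.I * b * m) = (-1) ^ m → Isum m a b = m) ∧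
    (Complex.exp (Complex.I * b * m) = -(-1) ^ m →
      Isum m a b = 1 - m -
        ((1 - Complex.exp (Complex.I * b)) / (1 + Complex.exp (Complex.I * b))) ^ 2) := by
  have hym : Complex.exp (Complex.I * b * m) = Complex.exp (Complex.I * (b:ℂ)) ^ m := by
    rw [← Complex.exp_nat_mul]; ring_nf
  have hnb : Complex.exp (Complex.I * (-(b:ℂ))) = (Complex.exp (Complex.I * (b:ℂ)))⁻¹ := by
    rw [← Complex.exp_neg]; ring_nf
  have hJ1 := Jsum_eq m hm a b ha
  have hJ2 := Jsum_eq m hm a (-b) ha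
  push_cast at hJ2
  rw [hnb] at hJ2
  have hIdef : Isum m a b = Jsum m a b + Jsum m a (-b) := rfl
  push_cast at hIdef
  rw [hym]
  obtain ⟨y, hy⟩ : ∃ y, Complex.exp (Complex.I * (b:ℂ)) = y := ⟨_, rfl⟩
  rw [hy] at hb hJ1 hJ2 ⊢
  have hy0 : y ≠ 0 := hy ▸ Complex.exp_ne_zero _
  obtain ⟨z, hzy⟩ : ∃ z, -y = z := ⟨_, rfl⟩
  have hyz : y = -z := by rw [← hzy]; ring
  have hz1 : z ≠ 1 := by
    intro h; apply hb; rw [hyz, h]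
  have hz0 : z ≠ 0 := by rw [← hzy]; simpa using hy0
  have hw1 : z⁻¹ ≠ 1 := by rw [Ne, inv_eq_one]; exact hz1
  have hd1 : z - 1 ≠ 0 := sub_ne_zero.mpr hz1
  have hd2 : z⁻¹ - 1 ≠ 0 := sub_ne_zero.mpr hw1
  have hinv : -y⁻¹ = z⁻¹ := by rw [← hzy, inv_neg]
  rw [hzy] at hJ1
  rw [hinv] at hJ2
  have hIsum : Isum m a b =
      -(((m : ℂ) * z ^ m * (z - 1) - z ^ (m + 1) + z) / (z - 1) ^ 2
        + z * ((m : ℂ) * (1 - z) - 1 + z ^ m) / ((1 - z) ^ 2 * z ^ m)) := by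
    rw [hIdef, hJ1, hJ2, sum_mul_geom z hz1 m, sum_mul_geom_inv z hz0 hz1 m]
    ring
  constructor
  · intro hc
    have hzm : z ^ m = 1 := by
      rw [← hzy, neg_pow, hc, ← mul_pow]; norm_num
    rw [hIsum, pow_succ z m, hzm]
    have h1 : (1 : ℂ) - z ≠ 0 := sub_ne_zero.mpr (Ne.symm hz1)
    field_simp
    ring
  · intro hc
    have hzm : z ^ m = -1 := by
      rw [← hzy, neg_pow, hc, mul_neg, ← mul_pow]; norm_num
    have h1 : (1 : ℂ) - z ≠ 0 := sub_ne_zero.mpr (Ne.symm hz1)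
    rw [hIsum, pow_succ z m, hzm, hyz,
      show (1:ℂ) + -z = 1 - z from by ring, show (1:ℂ) - -z = 1 + z from by ring]
    field_simp
    ring
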